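/- arXiv:1105.5060 — 2 statements merged into one kernel-verified Lean document; each statement's English description precedes it below -/
import Mathlib

section
/- Let 0 < k₁ ≤ k₂, let K : ℝ → ℝ be continuous with −k₂² ≤ K(s) ≤ −k₁² for all s, and let h : ℝ → ℝ be twice differentiable with h''(s) = −K(s)·h(s), h(0) = 1 and h'(0) = 0. Then h'(s) < 0 for all s < 0 and h'(s) > 0 for all s > 0. -/
lemma fermi_aux (k₁ : ℝ) (hk₁ : 0 < k₁) (K h h' : ℝ → ℝ)
    (hKub : ∀ s, K s ≤ -k₁ ^ 2)
    (hder : ∀ s, HasDerivAt h (h' s) s)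
    (hder2 : ∀ s, HasDerivAt h' (-K s * h s) s)
    (h0 : h 0 = 1) (h'0 : h' 0 = 0) :
    ∀ s, 0 < s → 0 < h' s := by
  have hcont : Continuous h := continuous_iff_continuousAt.mpr fun s => (hder s).continuousAt
  have hcont' : Continuous h' := continuous_iff_continuousAt.mpr fun s => (hder2 s).continuousAt
  have hKpos : ∀ s, (0:ℝ) < -K s := fun s => by nlinarith [hKub s]
  have hpos : ∀ s, 0 ≤ s → 0 < h s := by
    by_contra hc
    push_neg at hc
    obtain ⟨s₀, hs₀, hle⟩ := hc
    set A : Set ℝ := {s | 0 ≤ s ∧ h s ≤ 0} with hAdef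
    have hAclosed : IsClosed A := by
      have : A = {s : ℝ | 0 ≤ s} ∩ {s : ℝ | h s ≤ 0} := rfl
      rw [this]
      exact (isClosed_le continuous_const continuous_id).inter
        (isClosed_le hcont continuous_const)
    have hAne : A.Nonempty := ⟨s₀, hs₀, hle⟩
    have hbdd : BddBelow A := ⟨0, fun x hx => hx.1⟩
    have haA : sInf A ∈ A := hAclosed.csInf_mem hAne hbdd
    set a := sInf A with ha
    have ha0 : 0 < a := by
      rcases eq_or_lt_of_le haA.1 with he | h1
      · exfalso
        have := haA.2
        rw [← he, h0] at this
        linarith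
      · exact h1
    have hlt : ∀ t, 0 ≤ t → t < a → 0 < h t := by
      intro t ht hta
      by_contra hc2
      push_neg at hc2
      exact absurd (csInf_le hbdd ⟨ht, hc2⟩) (not_le.mpr hta)
    have hm' : StrictMonoOn h' (Set.Icc 0 a) := by
      apply strictMonoOn_of_deriv_pos (convex_Icc 0 a) hcont'.continuousOn
      intro x hx
      rw [interior_Icc] at hx
      rw [(hder2 x).deriv]
      exact mul_pos (hKpos x) (hlt x hx.1.le hx.2)
    have h'pos : ∀ t, 0 < t → t ≤ a → 0 < h' t := by
      intro t ht0 hta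
      have := hm' ⟨le_rfl, ha0.le⟩ ⟨ht0.le, hta⟩ ht0
      rwa [h'0] at this
    have hm : StrictMonoOn h (Set.Icc 0 a) := by
      apply strictMonoOn_of_deriv_pos (convex_Icc 0 a) hcont.continuousOn
      intro x hx
      rw [interior_Icc] at hx
      rw [(hder x).deriv]
      exact h'pos x hx.1 hx.2.le
    have : h 0 < h a := hm ⟨le_rfl, ha0.le⟩ ⟨ha0.le, le_rfl⟩ ha0
    rw [h0] at this
    linarith [haA.2]
  intro s hs
  have hm' : StrictMonoOn h' (Set.Ici 0) := by
    apply strictMonoOn_of_deriv_pos (convex_Ici 0) hcont'.continuousOn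
    intro x hx
    rw [interior_Ici] at hx
    rw [(hder2 x).deriv]
    exact mul_pos (hKpos x) (hpos x hx.le)
  have := hm' Set.self_mem_Ici (Set.mem_Ici.mpr hs.le) hs
  rwa [h'0] at this

/-- If `0 < k₁ ≤ k₂`, `K : ℝ → ℝ` is continuous with
`-k₂² ≤ K ≤ -k₁²`, and `h` is twice differentiable with `h'' = -K·h`, `h 0 = 1`,
`h' 0 = 0`, then `h' < 0` on `(-∞,0)` and `h' > 0` on `(0,∞)`. -/
theorem fermi_coefficient_monotone (k₁ k₂ : ℝ) (hk₁ : 0 < k₁) (hk : k₁ ≤ k₂)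
    (K h h' : ℝ → ℝ) (hKcont : Continuous K)
    (hKlb : ∀ s, -k₂ ^ 2 ≤ K s) (hKub : ∀ s, K s ≤ -k₁ ^ 2)
    (hder : ∀ s, HasDerivAt h (h' s) s)
    (hder2 : ∀ s, HasDerivAt h' (-K s * h s) s)
    (h0 : h 0 = 1) (h'0 : h' 0 = 0) :
    (∀ s : ℝ, s < 0 → h' s < 0) ∧ (∀ s : ℝ, 0 < s → 0 < h' s) := by
  constructor
  · intro s hs
    set g : ℝ → ℝ := fun t => h (-t) with hg
    set g' : ℝ → ℝ := fun t => h' (-t) * (-1) with hg'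
    have hgder : ∀ t, HasDerivAt g (g' t) t := fun t =>
      (hder (-t)).comp t (hasDerivAt_neg t)
    have hgder2 : ∀ t, HasDerivAt g' (-(fun u => K (-u)) t * g t) t := by
      intro t
      have h1 : HasDerivAt (fun u => h' (-u)) ((-K (-t) * h (-t)) * (-1)) t :=
        (hder2 (-t)).comp t (hasDerivAt_neg t)
      have h2 : HasDerivAt (fun y => h' (-y) * -1) (-K (-t) * h (-t) * -1 * -1) t := h1.mul_const (-1)
      convert h2 using 1
      simp [hg]
    have := fermi_aux k₁ hk₁ (fun u => K (-u)) g g' (fun u => hKub (-u))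
      hgder hgder2 (by simp [hg, h0]) (by simp [hg', h'0]) (-s) (by linarith)
    have hv : g' (-s) = -h' s := by simp [hg']
    rw [hv] at this
    linarith
  · exact fermi_aux k₁ hk₁ K h h' hKub hder hder2 h0 h'0
end

section
/- Let k > 0 and let h : ℝ → ℝ be continuous with h(s) ≥ cosh(ks) for all s. Then for all real a₁ < a₂, ∫_{a₁}^{a₂} ds / h(s) ≤ (2/k)·arctan( (k/2)·∫_{a₁}^{a₂} h(s) ds ). Equivalently, writing I = ∫_{a₁}^{a₂} h(s) ds and W = (1/k)·arcsinh(kI/2), one has ∫_{a₁}^{a₂} ds/h(s) ≤ ∫_{−W}^{W} ds/cosh(ks), where the symmetric interval (−W, W) satisfies ∫_{−W}^{W} cosh(ks) ds = I. -/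
open Real intervalIntegral

/-- Antiderivative of `cosh (k s)`. -/
lemma hasDerivAt_sinh_comp (k : ℝ) (hk : k ≠ 0) (s : ℝ) :
    HasDerivAt (fun t => Real.sinh (k * t) / k) (Real.cosh (k * s)) s := by
  have h1 : HasDerivAt (fun t : ℝ => k * t) k s := by
    simpa using (hasDerivAt_id s).const_mul k
  have h2 := (Real.hasDerivAt_sinh (k * s)).comp s h1
  have h3 := h2.div_const k
  refine h3.congr_deriv ?_
  field_simp

/-- Antiderivative of `1 / cosh (k s)`. -/
lemma hasDerivAt_arctan_sinh (k : ℝ) (hk : k ≠ 0) (s : ℝ) :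
    HasDerivAt (fun t => Real.arctan (Real.sinh (k * t)) / k)
      (1 / Real.cosh (k * s)) s := by
  have h1 : HasDerivAt (fun t : ℝ => k * t) k s := by
    simpa using (hasDerivAt_id s).const_mul k
  have h2 := (Real.hasDerivAt_sinh (k * s)).comp s h1
  have h3 := (Real.hasDerivAt_arctan (Real.sinh (k * s))).comp s h2
  have h4 := h3.div_const k
  have hc : Real.cosh (k * s) ≠ 0 := (Real.cosh_pos (k * s)).ne'
  refine h4.congr_deriv ?_
  have hcs : 1 + Real.sinh (k * s) ^ 2 = Real.cosh (k * s) ^ 2 := by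
    rw [Real.cosh_sq]; ring
  rw [hcs]
  field_simp

lemma arctan_sum_le (c : ℝ) (hc : 0 ≤ c) (m : ℝ) (hm : 0 ≤ m) :
    Real.arctan (c + m) + Real.arctan (c - m) ≤ 2 * Real.arctan c := by
  set f : ℝ → ℝ := fun x => Real.arctan (c + x) + Real.arctan (c - x) with hf
  have hd : ∀ x : ℝ, HasDerivAt f
      (1 / (1 + (c + x) ^ 2) - 1 / (1 + (c - x) ^ 2)) x := by
    intro x
    have h1 : HasDerivAt (fun x : ℝ => c + x) 1 x := by
      simpa using (hasDerivAt_id x).const_add c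
    have h2 : HasDerivAt (fun x : ℝ => c - x) (-1) x := by
      simpa using (hasDerivAt_id x).const_sub c
    have h3 := (Real.hasDerivAt_arctan (c + x)).comp x h1
    have h4 := (Real.hasDerivAt_arctan (c - x)).comp x h2
    exact (h3.add h4).congr_deriv (by ring)
  have hanti : AntitoneOn f (Set.Ici 0) := by
    apply antitoneOn_of_deriv_nonpos (convex_Ici 0)
    · exact Continuous.continuousOn
        ((Real.continuous_arctan.comp (continuous_const.add continuous_id)).add
          (Real.continuous_arctan.comp (continuous_const.sub continuous_id)))
    · intro x hx
      exact ((hd x).differentiableAt).differentiableWithinAt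
    · intro x hx
      rw [(hd x).deriv]
      have hx0 : 0 < x := by simpa using hx
      have hsq : (c - x) ^ 2 ≤ (c + x) ^ 2 := by nlinarith
      have h1 : (0:ℝ) < 1 + (c - x) ^ 2 := by positivity
      have h2 : (0:ℝ) < 1 + (c + x) ^ 2 := by positivity
      have h5 : 1 / (1 + (c + x) ^ 2) ≤ 1 / (1 + (c - x) ^ 2) :=
        one_div_le_one_div_of_le h1 (by linarith)
      linarith
  have := hanti (Set.self_mem_Ici) (Set.mem_Ici.2 hm) hm
  simpa [hf, two_mul] using this

lemma arctan_diff_le (x y : ℝ) (hxy : x ≤ y) :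
    Real.arctan y - Real.arctan x ≤ 2 * Real.arctan ((y - x) / 2) := by
  set c := (y - x) / 2 with hc
  set m := (x + y) / 2 with hm
  have hc0 : 0 ≤ c := by simp [hc]; linarith
  have hy : y = c + m := by rw [hc, hm]; ring
  have hx : x = -(c - m) := by rw [hc, hm]; ring
  rw [hy, hx, Real.arctan_neg, sub_neg_eq_add]
  rcases le_or_gt 0 m with h | h
  · exact arctan_sum_le c hc0 m h
  · have := arctan_sum_le c hc0 (-m) (by linarith)
    have e1 : c + -m = c - m := by ring
    have e2 : c - -m = c + m := by ring
    rw [e1, e2] at this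
    linarith

/-- If `h ≥ cosh (k ·)` is continuous, then for `a₁ < a₂`,
`∫_{a₁}^{a₂} ds / h ≤ (2/k) · arctan ((k/2) · ∫_{a₁}^{a₂} h)`; equivalently, with
`I = ∫_{a₁}^{a₂} h` and `W = (1/k) · arsinh (k I / 2)`, one has
`∫_{a₁}^{a₂} ds / h ≤ ∫_{-W}^{W} ds / cosh (k s)`, where the symmetric interval
satisfies `∫_{-W}^{W} cosh (k s) ds = I`. -/
theorem integral_one_div_le_comparison (k : ℝ) (hk : 0 < k) (h : ℝ → ℝ)
    (hcont : Continuous h) (hge : ∀ s, Real.cosh (k * s) ≤ h s)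
    (a₁ a₂ : ℝ) (ha : a₁ < a₂) (W : ℝ)
    (hW : W = (1 / k) * Real.arsinh (k * (∫ s in a₁..a₂, h s) / 2)) :
    (∫ s in a₁..a₂, 1 / h s) ≤
        (2 / k) * Real.arctan ((k / 2) * ∫ s in a₁..a₂, h s) ∧
    (∫ s in a₁..a₂, 1 / h s) ≤ (∫ s in (-W)..W, 1 / Real.cosh (k * s)) ∧
    (∫ s in (-W)..W, Real.cosh (k * s)) = ∫ s in a₁..a₂, h s := by
  have hk' : k ≠ 0 := hk.ne'
  set I := ∫ s in a₁..a₂, h s with hI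
  have hpos : ∀ s, 0 < h s := fun s => lt_of_lt_of_le (Real.cosh_pos (k * s)) (hge s)
  -- continuity facts
  have hc1 : Continuous (fun s => 1 / h s) :=
    continuous_const.div hcont fun s => (hpos s).ne'
  have hc2 : Continuous (fun s => Real.cosh (k * s)) := by fun_prop
  have hc3 : Continuous (fun s => 1 / Real.cosh (k * s)) :=
    continuous_const.div hc2 fun s => (Real.cosh_pos (k * s)).ne'
  -- fundamental theorem computations
  have intcosh : ∀ b₁ b₂ : ℝ, (∫ s in b₁..b₂, Real.cosh (k * s))
      = Real.sinh (k * b₂) / k - Real.sinh (k * b₁) / k := by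
    intro b₁ b₂
    exact integral_eq_sub_of_hasDerivAt (fun s _ => hasDerivAt_sinh_comp k hk' s)
      (hc2.intervalIntegrable _ _)
  have intsech : ∀ b₁ b₂ : ℝ, (∫ s in b₁..b₂, 1 / Real.cosh (k * s))
      = Real.arctan (Real.sinh (k * b₂)) / k - Real.arctan (Real.sinh (k * b₁)) / k := by
    intro b₁ b₂
    exact integral_eq_sub_of_hasDerivAt (fun s _ => hasDerivAt_arctan_sinh k hk' s)
      (hc3.intervalIntegrable _ _)
  have hsinhW : Real.sinh (k * W) = k * I / 2 := by
    rw [hW, ← mul_assoc, mul_one_div, div_self hk', one_mul, Real.sinh_arsinh]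
  -- cosh integral ≤ h integral
  have hcoshle : (∫ s in a₁..a₂, Real.cosh (k * s)) ≤ I := by
    apply intervalIntegral.integral_mono_on ha.le (hc2.intervalIntegrable _ _)
      (hcont.intervalIntegrable _ _)
    intro x _; exact hge x
  -- first inequality
  have step1 : (∫ s in a₁..a₂, 1 / h s) ≤ ∫ s in a₁..a₂, 1 / Real.cosh (k * s) := by
    apply intervalIntegral.integral_mono_on ha.le (hc1.intervalIntegrable _ _)
      (hc3.intervalIntegrable _ _)
    intro x _
    exact one_div_le_one_div_of_le (Real.cosh_pos (k * x)) (hge x)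
  have hsinhle : Real.sinh (k * a₁) ≤ Real.sinh (k * a₂) :=
    Real.sinh_le_sinh.2 (by nlinarith)
  have step2 : (∫ s in a₁..a₂, 1 / Real.cosh (k * s))
      ≤ (2 / k) * Real.arctan ((k / 2) * I) := by
    rw [intsech]
    have h1 := arctan_diff_le (Real.sinh (k * a₁)) (Real.sinh (k * a₂)) hsinhle
    have h2 : (Real.sinh (k * a₂) - Real.sinh (k * a₁)) / 2 ≤ (k / 2) * I := by
      have := hcoshle
      rw [intcosh] at this
      rw [div_sub_div_same, div_le_iff₀ hk] at this
      nlinarith [this]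
    have h3 : Real.arctan ((Real.sinh (k * a₂) - Real.sinh (k * a₁)) / 2)
        ≤ Real.arctan ((k / 2) * I) := Real.arctan_strictMono.monotone h2
    have h4 : Real.arctan (Real.sinh (k * a₂)) - Real.arctan (Real.sinh (k * a₁))
        ≤ 2 * Real.arctan ((k / 2) * I) := by linarith
    rw [div_sub_div_same, div_le_iff₀ hk]
    calc Real.arctan (Real.sinh (k * a₂)) - Real.arctan (Real.sinh (k * a₁))
        ≤ 2 * Real.arctan ((k / 2) * I) := h4
      _ = 2 / k * Real.arctan (k / 2 * I) * k := by field_simp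
  have main1 : (∫ s in a₁..a₂, 1 / h s) ≤ (2 / k) * Real.arctan ((k / 2) * I) :=
    step1.trans step2
  refine ⟨main1, ?_, ?_⟩
  · rw [intsech]
    have : Real.sinh (k * -W) = -(k * I / 2) := by
      rw [mul_neg, Real.sinh_neg, hsinhW]
    rw [this, hsinhW, Real.arctan_neg]
    calc (∫ s in a₁..a₂, 1 / h s) ≤ (2 / k) * Real.arctan ((k / 2) * I) := main1
      _ = Real.arctan (k * I / 2) / k - -Real.arctan (k * I / 2) / k := by
          rw [show (k / 2) * I = k * I / 2 by ring]; field_simp; ring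
  · rw [intcosh]
    have : Real.sinh (k * -W) = -(k * I / 2) := by
      rw [mul_neg, Real.sinh_neg, hsinhW]
    rw [this, hsinhW]
    field_simp
    ring
end
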